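/- The identities a² ≈ bcde, abc ≈ cba, and aba ≈ bab form an identity basis for the variety generated by the semigroup B = ⟨x, y | x² = 0, y² = 0, xyx = yxy⟩: every identity holding in B is a consequence of these three identities. -/

import Mathlib

/-- Evaluation of the nonempty word `x :: w` under the substitution `φ`. -/
def evalWord {X S : Type*} [Mul S] (φ : X → S) : X → List X → S
  | x, [] => φ x
  | x, y :: l => φ x * evalWord φ y l

/-- The 6-element nilpotent semigroup B = ⟨x, y | x² = 0, y² = 0, xyx = yxy⟩. -/
inductive SgpB : Type | x | y | xy | yx | xyx | zero

def SgpB.mul : SgpB → SgpB → SgpB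
  | .x, .y => .xy
  | .x, .yx => .xyx
  | .y, .x => .yx
  | .y, .xy => .xyx
  | .xy, .x => .xyx
  | .yx, .y => .xyx
  | _, _ => .zero

instance : Semigroup SgpB where
  mul := SgpB.mul
  mul_assoc := by intro a b c; cases a <;> cases b <;> cases c <;> rfl

def SgpB.toNat : SgpB → ℕ
  | .x => 0
  | .y => 1
  | .xy => 2
  | .yx => 3
  | .xyx => 4
  | .zero => 5

instance : DecidableEq SgpB := fun a b =>
  decidable_of_iff (a.toNat = b.toNat) (by cases a <;> cases b <;> simp [SgpB.toNat])

instance : Fintype SgpB :=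
  ⟨{SgpB.x, SgpB.y, SgpB.xy, SgpB.yx, SgpB.xyx, SgpB.zero}, fun a => by cases a <;> simp⟩

lemma Bsq : ∀ p : SgpB, p * p = SgpB.zero := by decide
lemma Bz : ∀ p : SgpB, p * SgpB.zero = SgpB.zero := by decide
lemma B4 : ∀ p q r s : SgpB, p * (q * (r * s)) = SgpB.zero := by decide
lemma Bppq : ∀ p q : SgpB, p * (p * q) = SgpB.zero := by decide
lemma Bpqq : ∀ p q : SgpB, p * (q * q) = SgpB.zero := by decide
lemma Bnexy3 : ∀ p q r : SgpB, p * (q * r) ≠ SgpB.x * SgpB.y := by decide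
lemma Bxy_inv : ∀ p q : SgpB, p * q = SgpB.x * SgpB.y → p = SgpB.x ∧ q = SgpB.y := by decide
lemma Bxyx_inv : ∀ p q r : SgpB, p * (q * r) = SgpB.x * (SgpB.y * SgpB.x) →
    (p = SgpB.x ∧ q = SgpB.y ∧ r = SgpB.x) ∨ (p = SgpB.y ∧ q = SgpB.x ∧ r = SgpB.y) := by decide

lemma Blong {X : Type} (φ : X → SgpB) :
    ∀ (l : List X) (p q r s : X), evalWord φ p (q :: r :: s :: l) = SgpB.zero := by
  intro l
  induction l with
  | nil => intro p q r s; exact B4 _ _ _ _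
  | cons e l ih =>
      intro p q r s
      show φ p * evalWord φ q (r :: s :: e :: l) = SgpB.zero
      rw [ih q r s e, Bz]

lemma Bconst {X : Type} :
    ∀ (l : List X) (b c : X), evalWord (fun _ => SgpB.x) b (c :: l) = SgpB.zero := by
  intro l
  induction l with
  | nil => intro b c; exact Bsq SgpB.x
  | cons d l ih =>
      intro b c
      show SgpB.x * evalWord (fun _ => SgpB.x) c (d :: l) = SgpB.zero
      rw [ih c d, Bz]

lemma Bz3 {X : Type} (φ : X → SgpB) {a c d : X} (hz : a = c ∨ c = d) :
    evalWord φ a [c, d] = SgpB.zero := by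
  show φ a * (φ c * φ d) = SgpB.zero
  rcases hz with h | h
  · rw [h]; exact Bppq _ _
  · rw [h]; exact Bpqq _ _

-- ite helpers
lemma itexy_x {p : Prop} [Decidable p] (h : (if p then SgpB.x else SgpB.y) = SgpB.x) : p := by
  by_cases hp : p
  · exact hp
  · rw [if_neg hp] at h; exact absurd h (by decide)

lemma itexy_y {p : Prop} [Decidable p] (h : (if p then SgpB.x else SgpB.y) = SgpB.y) : ¬ p := by
  by_cases hp : p
  · rw [if_pos hp] at h; exact absurd h (by decide)
  · exact hp

lemma iteyx_y {p : Prop} [Decidable p] (h : (if p then SgpB.y else SgpB.x) = SgpB.y) : p := by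
  by_cases hp : p
  · exact hp
  · rw [if_neg hp] at h; exact absurd h (by decide)

lemma ite3_y {p q r : Prop} [Decidable p] [Decidable q] [Decidable r]
    (h : (if p then SgpB.x else if q then SgpB.y else if r then SgpB.x else SgpB.zero) = SgpB.y) :
    q := by
  by_cases hp : p
  · rw [if_pos hp] at h; exact absurd h (by decide)
  · rw [if_neg hp] at h
    by_cases hq : q
    · exact hq
    · rw [if_neg hq] at h
      by_cases hr : r
      · rw [if_pos hr] at h; exact absurd h (by decide)
      · rw [if_neg hr] at h; exact absurd h (by decide)

lemma ite3_x {p q r : Prop} [Decidable p] [Decidable q] [Decidable r]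
    (h : (if p then SgpB.x else if q then SgpB.y else if r then SgpB.x else SgpB.zero) = SgpB.x) :
    p ∨ r := by
  by_cases hp : p
  · exact Or.inl hp
  · rw [if_neg hp] at h
    by_cases hq : q
    · rw [if_pos hq] at h; exact absurd h (by decide)
    · rw [if_neg hq] at h
      by_cases hr : r
      · exact Or.inr hr
      · rw [if_neg hr] at h; exact absurd h (by decide)

section Slemmas
variable {S : Type} [Semigroup S]

lemma Ssq (h1 : ∀ p q r s t : S, p * p = q * r * s * t) (p q : S) : p * p = q * q :=
  (h1 p q q q q).trans (h1 q q q q q).symm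

lemma Scube (h1 : ∀ p q r s t : S, p * p = q * r * s * t)
    (h3 : ∀ p q : S, p * q * p = q * p * q) (c : S) : c * c * c = c * c := by
  have h := h3 c (c * c)
  rw [← mul_assoc c c c] at h
  rw [← h1 c c c c c] at h
  rw [← mul_assoc (c * c * c) c c] at h
  rw [← h1 c c c c c] at h
  exact h.symm

lemma SLabs (h1 : ∀ p q r s t : S, p * p = q * r * s * t)
    (h3 : ∀ p q : S, p * q * p = q * p * q) (p q : S) : p * (q * q) = q * q := by
  calc p * (q * q) = p * (p * p) := by rw [Ssq h1 q p]
    _ = p * p * p := (mul_assoc p p p).symm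
    _ = p * p := Scube h1 h3 p
    _ = q * q := Ssq h1 p q

lemma SRabs (h1 : ∀ p q r s t : S, p * p = q * r * s * t)
    (h3 : ∀ p q : S, p * q * p = q * p * q) (p q : S) : q * q * p = q * q := by
  calc q * q * p = p * p * p := by rw [Ssq h1 q p]
    _ = p * p := Scube h1 h3 p
    _ = q * q := Ssq h1 p q

lemma S4 (h1 : ∀ p q r s t : S, p * p = q * r * s * t) (p q r s t : S) :
    p * (q * (r * s)) = t * t := by
  simp only [← mul_assoc]
  exact (h1 t p q r s).symm

lemma Slong {X : Type} (h1 : ∀ p q r s t : S, p * p = q * r * s * t)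
    (h3 : ∀ p q : S, p * q * p = q * p * q) (ψ : X → S) :
    ∀ (l : List X) (p q r s : X), evalWord ψ p (q :: r :: s :: l) = ψ p * ψ p := by
  intro l
  induction l with
  | nil => intro p q r s; exact S4 h1 _ _ _ _ _
  | cons e l ih =>
      intro p q r s
      show ψ p * evalWord ψ q (r :: s :: e :: l) = ψ p * ψ p
      rw [ih q r s e]
      exact (SLabs h1 h3 (ψ p) (ψ q)).trans (Ssq h1 (ψ q) (ψ p))

lemma Sz3 {X : Type} (h1 : ∀ p q r s t : S, p * p = q * r * s * t)
    (h3 : ∀ p q : S, p * q * p = q * p * q) (ψ : X → S) {a c d : X} (hz : a = c ∨ c = d) :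
    evalWord ψ a [c, d] = ψ a * ψ a := by
  show ψ a * (ψ c * ψ d) = ψ a * ψ a
  rcases hz with h | h
  · rw [h, ← mul_assoc, SRabs h1 h3]
  · rw [h, SLabs h1 h3]
    exact Ssq h1 _ _

end Slemmas

theorem keyLemma (X : Type) (a b : X) (u v : List X)
    (hlen : u.length ≤ v.length)
    (hB : ∀ φ : X → SgpB, evalWord φ a u = evalWord φ b v)
    {S : Type} [Semigroup S]
    (h1 : ∀ p q r s t : S, p * p = q * r * s * t)
    (h2 : ∀ p q r : S, p * q * r = r * q * p)
    (h3 : ∀ p q : S, p * q * p = q * p * q)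
    (ψ : X → S) : evalWord ψ a u = evalWord ψ b v := by
  classical
  rcases u with _ | ⟨c, _ | ⟨d, _ | ⟨g, l⟩⟩⟩
  · -- u = []
    rcases v with _ | ⟨e, l'⟩
    · by_cases hab : a = b
      · subst hab; rfl
      · exfalso
        have k := hB (fun t => if t = a then SgpB.x else SgpB.y)
        simp only [evalWord, if_true] at k
        rw [if_neg (fun h : b = a => hab h.symm)] at k
        exact absurd k (by decide)
    · exfalso
      have k := hB (fun _ => SgpB.x)
      rw [Bconst] at k
      simp only [evalWord] at k
      exact absurd k (by decide)
  · -- u = [c]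
    rcases v with _ | ⟨e, _ | ⟨f, _ | ⟨g', l'⟩⟩⟩
    · exfalso; simp only [List.length_cons, List.length_nil] at hlen; omega
    · -- v = [e]
      by_cases hac : a = c
      · subst hac
        by_cases hbe : b = e
        · subst hbe
          show ψ a * ψ a = ψ b * ψ b
          exact Ssq h1 _ _
        · exfalso
          have k := hB (fun t => if t = b then SgpB.x else SgpB.y)
          simp only [evalWord, if_true] at k
          rw [Bsq] at k
          rw [if_neg (fun h : e = b => hbe h.symm)] at k
          exact absurd k (by decide)
      · have k1 := hB (fun t => if t = a then SgpB.x else SgpB.y)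
        simp only [evalWord, if_true] at k1
        rw [if_neg (fun h : c = a => hac h.symm)] at k1
        obtain ⟨hb, he⟩ := Bxy_inv _ _ k1.symm
        obtain rfl : a = b := (itexy_x hb).symm
        have k2 := hB (fun t => if t = c then SgpB.y else SgpB.x)
        simp only [evalWord, if_true] at k2
        rw [if_neg hac] at k2
        obtain ⟨-, he2⟩ := Bxy_inv _ _ k2.symm
        obtain rfl : c = e := (iteyx_y he2).symm
        rfl
    · -- v = [e, f]
      by_cases hac : a = c
      · subst hac
        have hv : b = e ∨ e = f := by
          by_contra hcon
          push_neg at hcon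
          have k := hB (fun t => if t = e then SgpB.y else SgpB.x)
          simp only [evalWord, if_true] at k
          rw [Bsq] at k
          rw [if_neg (fun h : b = e => hcon.1 h),
            if_neg (fun h : f = e => hcon.2 h.symm)] at k
          exact absurd k (by decide)
        show ψ a * ψ a = evalWord ψ b [e, f]
        rw [Sz3 h1 h3 ψ hv]
        exact Ssq h1 _ _
      · exfalso
        have k := hB (fun t => if t = a then SgpB.x else SgpB.y)
        simp only [evalWord, if_true] at k
        rw [if_neg (fun h : c = a => hac h.symm)] at k
        exact Bnexy3 _ _ _ k.symm
    · -- v = e :: f :: g' :: l'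
      by_cases hac : a = c
      · subst hac
        show ψ a * ψ a = _
        rw [Slong h1 h3 ψ]
        exact Ssq h1 _ _
      · exfalso
        have k := hB (fun t => if t = a then SgpB.x else SgpB.y)
        rw [Blong] at k
        simp only [evalWord, if_true] at k
        rw [if_neg (fun h : c = a => hac h.symm)] at k
        exact absurd k (by decide)
  · -- u = [c, d]
    rcases v with _ | ⟨e, _ | ⟨f, _ | ⟨g', l'⟩⟩⟩
    · exfalso; simp only [List.length_cons, List.length_nil] at hlen; omega
    · exfalso; simp only [List.length_cons, List.length_nil] at hlen; omega
    · -- v = [e, f] : the 3-3 case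
      by_cases hz1 : a = c ∨ c = d
      · by_cases hz2 : b = e ∨ e = f
        · rw [Sz3 h1 h3 ψ hz1, Sz3 h1 h3 ψ hz2]
          exact Ssq h1 _ _
        · exfalso
          push_neg at hz2
          have k := hB (fun t => if t = e then SgpB.y else SgpB.x)
          rw [Bz3 _ hz1] at k
          simp only [evalWord, if_true] at k
          rw [if_neg (fun h : b = e => hz2.1 h),
            if_neg (fun h : f = e => hz2.2 h.symm)] at k
          exact absurd k (by decide)
      · push_neg at hz1
        obtain ⟨hac, hcd⟩ := hz1
        by_cases hz2 : b = e ∨ e = f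
        · exfalso
          have k := hB (fun t => if t = c then SgpB.y else SgpB.x)
          rw [Bz3 _ hz2] at k
          simp only [evalWord, if_true] at k
          rw [if_neg (fun h : a = c => hac h),
            if_neg (fun h : d = c => hcd h.symm)] at k
          exact absurd k (by decide)
        · push_neg at hz2
          obtain ⟨hbe, hef⟩ := hz2
          by_cases had : a = d
          · -- u = [c, a] pattern aba
            subst had
            have k1 := hB (fun t => if t = a then SgpB.x else SgpB.y)
            simp only [evalWord, if_true] at k1
            rw [if_neg (fun h : c = a => hac h.symm)] at k1
            obtain ⟨hb, he, hf⟩ | ⟨hb, he, hf⟩ := Bxyx_inv _ _ _ k1.symm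
            · obtain rfl : a = b := (itexy_x hb).symm
              obtain rfl : a = f := (itexy_x hf).symm
              have k2 := hB (fun t => if t = c then SgpB.y else SgpB.x)
              simp only [evalWord, if_true] at k2
              rw [if_neg (fun h : a = c => hac h)] at k2
              by_cases hec : e = c
              · subst hec; rfl
              · rw [if_neg hec] at k2
                exact absurd k2 (by decide)
            · obtain rfl : a = e := (itexy_x he).symm
              have k2 := hB (fun t => if t = c then SgpB.y else SgpB.x)
              simp only [evalWord, if_true] at k2
              rw [if_neg (fun h : a = c => hac h)] at k2
              have hbc : b = c := by
                by_cases h : b = c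
                · exact h
                · exfalso
                  rw [if_neg h] at k2
                  by_cases h' : f = c
                  · rw [if_pos h'] at k2; exact absurd k2 (by decide)
                  · rw [if_neg h'] at k2; exact absurd k2 (by decide)
              have hfc : f = c := by
                by_cases h' : f = c
                · exact h'
                · exfalso
                  rw [hbc, if_pos rfl, if_neg h'] at k2
                  exact absurd k2 (by decide)
              obtain rfl : c = b := hbc.symm
              obtain rfl : c = f := hfc.symm
              show ψ a * (ψ c * ψ a) = ψ c * (ψ a * ψ c)
              rw [← mul_assoc, ← mul_assoc]
              exact h3 _ _
          · -- u = [c, d] with a, c, d pairwise distinct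
            have k1 := hB (fun t => if t = a then SgpB.x else
              if t = c then SgpB.y else if t = d then SgpB.x else SgpB.zero)
            simp only [evalWord, if_true] at k1
            rw [if_neg (fun h : c = a => hac h.symm)] at k1
            rw [if_neg (fun h : d = a => had h.symm), if_neg (fun h : d = c => hcd h.symm)] at k1
            obtain ⟨hb, he, hf⟩ | ⟨hb, he, hf⟩ := Bxyx_inv _ _ _ k1.symm
            · obtain rfl : c = e := (ite3_y he).symm
              rcases ite3_x hb with hba | hbd
              · obtain rfl : a = b := hba.symm
                rcases ite3_x hf with hfa | hfd
                · exfalso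
                  obtain rfl : a = f := hfa.symm
                  have k2 := hB (fun t => if t = a then SgpB.x else SgpB.y)
                  simp only [evalWord, if_true] at k2
                  rw [if_neg (fun h : c = a => hac h.symm),
                    if_neg (fun h : d = a => had h.symm)] at k2
                  exact absurd k2 (by decide)
                · obtain rfl : d = f := hfd.symm
                  rfl
              · obtain rfl : d = b := hbd.symm
                rcases ite3_x hf with hfa | hfd
                · obtain rfl : a = f := hfa.symm
                  show ψ a * (ψ c * ψ d) = ψ d * (ψ c * ψ a)
                  rw [← mul_assoc, ← mul_assoc]
                  exact h2 _ _ _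
                · exfalso
                  obtain rfl : d = f := hfd.symm
                  have k2 := hB (fun t => if t = d then SgpB.x else SgpB.y)
                  simp only [evalWord, if_true] at k2
                  rw [if_neg (fun h : a = d => had h),
                    if_neg (fun h : c = d => hcd h)] at k2
                  exact absurd k2 (by decide)
            · obtain rfl : c = b := (ite3_y hb).symm
              obtain rfl : c = f := (ite3_y hf).symm
              exfalso
              rcases ite3_x he with hea | hed
              · obtain rfl : a = e := hea.symm
                have k2 := hB (fun t => if t = a then SgpB.x else SgpB.y)
                simp only [evalWord, if_true] at k2
                rw [if_neg (fun h : c = a => hac h.symm),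
                  if_neg (fun h : d = a => had h.symm)] at k2
                exact absurd k2 (by decide)
              · obtain rfl : d = e := hed.symm
                have k2 := hB (fun t => if t = d then SgpB.x else SgpB.y)
                simp only [evalWord, if_true] at k2
                rw [if_neg (fun h : a = d => had h),
                  if_neg (fun h : c = d => hcd h)] at k2
                exact absurd k2 (by decide)
    · -- v = e :: f :: g' :: l'
      by_cases hz1 : a = c ∨ c = d
      · rw [Sz3 h1 h3 ψ hz1, Slong h1 h3 ψ]
        exact Ssq h1 _ _
      · push_neg at hz1
        exfalso
        have k := hB (fun t => if t = c then SgpB.y else SgpB.x)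
        rw [Blong] at k
        simp only [evalWord, if_true] at k
        rw [if_neg (fun h : a = c => hz1.1 h),
          if_neg (fun h : d = c => hz1.2 h.symm)] at k
        exact absurd k (by decide)
  · -- u = c :: d :: g :: l
    rcases v with _ | ⟨e, _ | ⟨f, _ | ⟨g', l'⟩⟩⟩
    · exfalso; simp only [List.length_cons, List.length_nil] at hlen; omega
    · exfalso; simp only [List.length_cons, List.length_nil] at hlen; omega
    · exfalso; simp only [List.length_cons, List.length_nil] at hlen; omega
    · rw [Slong h1 h3 ψ, Slong h1 h3 ψ]
      exact Ssq h1 _ _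

/-- The identities a² ≈ bcde, abc ≈ cba and aba ≈ bab form an identity basis of
the variety generated by B: they hold in B, and every identity holding in B holds
in every semigroup satisfying these three identities. -/
theorem SgpB_identity_basis :
    ((∀ p q r s t : SgpB, p * p = q * r * s * t) ∧
      (∀ p q r : SgpB, p * q * r = r * q * p) ∧
      (∀ p q : SgpB, p * q * p = q * p * q)) ∧
    (∀ (X : Type) (a b : X) (u v : List X),
      (∀ φ : X → SgpB, evalWord φ a u = evalWord φ b v) →
      ∀ (S : Type) [Semigroup S],
        (∀ p q r s t : S, p * p = q * r * s * t) →
        (∀ p q r : S, p * q * r = r * q * p) →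
        (∀ p q : S, p * q * p = q * p * q) →
        ∀ ψ : X → S, evalWord ψ a u = evalWord ψ b v) := by
  constructor
  · exact ⟨by decide, by decide, by decide⟩
  · intro X a b u v hB S _inst h1 h2 h3 ψ
    rcases le_total u.length v.length with h | h
    · exact keyLemma X a b u v h hB h1 h2 h3 ψ
    · exact (keyLemma X b a v u h (fun φ => (hB φ).symm) h1 h2 h3 ψ).symm
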